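/- Let q, l, k, p, n be positive integers with q < l < k < p < n, k − l − q < 0 and n−p+k−q < p−l, and let R₃ be the corresponding intersection of three quadrics in ℝ^n. Then R₃ is homeomorphic to the product of unit spheres S^{n−p+k−q−1} × S^{p−k−1} × S^{q−1}. -/

import Mathlib

open Metric

/-- The intersection of three quadrics in ℝⁿ associated to a product of three simplices:
`(u₁²+⋯+u_q²) + (u_{q+1}²+⋯+u_l²) + (u_{p+1}²+⋯+u_n²) = n-p+l`,
`-(u₁²+⋯+u_q²) + (u_{l+1}²+⋯+u_k²) = k-l-q`,
`(u₁²+⋯+u_q²) + (u_{k+1}²+⋯+u_p²) = p-k+q`. -/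
def quadR3 (q l k p n : ℕ) : Set (EuclideanSpace ℝ (Fin n)) :=
  {u | (∑ j : Fin n, if (j : ℕ) < l ∨ p ≤ (j : ℕ) then u j ^ 2 else 0) = (n : ℝ) - p + l ∧
       (∑ j : Fin n, if (j : ℕ) < q then -(u j ^ 2)
          else if l ≤ (j : ℕ) ∧ (j : ℕ) < k then u j ^ 2 else 0) = (k : ℝ) - l - q ∧
       (∑ j : Fin n, if (j : ℕ) < q ∨ (k ≤ (j : ℕ) ∧ (j : ℕ) < p) then u j ^ 2 else 0)
          = (p : ℝ) - k + q}

open Finset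

noncomputable section QR3aux

/-- extend a Euclidean vector to a function on ℕ by zero -/
def xt {d : ℕ} (v : EuclideanSpace ℝ (Fin d)) (x : ℕ) : ℝ :=
  if hx : x < d then v ⟨x, hx⟩ else 0

/-- sum of squares of coordinates in `[off, off+M)` -/
def blk (n off M : ℕ) (u : EuclideanSpace ℝ (Fin n)) : ℝ :=
  ∑ j : Fin n, if off ≤ (j:ℕ) ∧ (j:ℕ) < off + M then (u j)^2 else 0

lemma xt_lt {d : ℕ} (v : EuclideanSpace ℝ (Fin d)) {x : ℕ} (hx : x < d) :
    xt v x = v ⟨x, hx⟩ := dif_pos hx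

lemma xt_fin {d : ℕ} (v : EuclideanSpace ℝ (Fin d)) (i : Fin d) : xt v (i:ℕ) = v i := by
  rw [xt_lt v i.2]

lemma blk_nonneg (n off M : ℕ) (u : EuclideanSpace ℝ (Fin n)) : 0 ≤ blk n off M u := by
  apply Finset.sum_nonneg; intro j _; split_ifs <;> positivity

lemma blk_add (n off M1 M2 : ℕ) (u : EuclideanSpace ℝ (Fin n)) :
    blk n off (M1 + M2) u = blk n off M1 u + blk n (off + M1) M2 u := by
  unfold blk
  rw [← Finset.sum_add_distrib]
  apply Finset.sum_congr rfl
  intro j _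
  split_ifs <;> first | (exfalso; omega) | ring

lemma block_sum (N off M : ℕ) (h : off + M ≤ N) (f : Fin N → ℝ) :
    (∑ j : Fin N, if off ≤ (j:ℕ) ∧ (j:ℕ) < off + M then f j else 0)
      = ∑ i : Fin M, f ⟨off + i, by omega⟩ := by
  rw [← Finset.sum_filter]
  refine Finset.sum_bij' (fun j hj => (⟨(j:ℕ) - off, by
      simp [Finset.mem_filter] at hj; omega⟩ : Fin M))
    (fun i _ => (⟨off + (i:ℕ), by omega⟩ : Fin N)) ?_ ?_ ?_ ?_ ?_
  · intro a ha; simp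
  · intro a ha; simp [Finset.mem_filter]; try omega
  · intro a ha; simp [Finset.mem_filter] at ha; ext; simp; try omega
  · intro a ha; ext; simp
  · intro a ha; simp [Finset.mem_filter] at ha; congr 1; ext; simp; try omega

lemma blk_eval (n off M : ℕ) (h : off + M ≤ n) (u : EuclideanSpace ℝ (Fin n)) :
    blk n off M u = ∑ i : Fin M, (xt u (off + (i:ℕ)))^2 := by
  unfold blk
  rw [block_sum n off M h]
  apply Finset.sum_congr rfl
  intro i _
  rw [xt_lt u (by omega : off + (i:ℕ) < n)]

lemma fin_split (M c : ℕ) (h : c ≤ M) (g : ℕ → ℝ) :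
    (∑ i : Fin M, g (i:ℕ))
      = (∑ i : Fin c, g (i:ℕ)) + ∑ i : Fin (M - c), g (c + (i:ℕ)) := by
  have h1 : (∑ i : Fin M, g (i:ℕ))
      = (∑ j : Fin M, if 0 ≤ (j:ℕ) ∧ (j:ℕ) < 0 + c then g (j:ℕ) else 0)
        + ∑ j : Fin M, if c ≤ (j:ℕ) ∧ (j:ℕ) < c + (M - c) then g (j:ℕ) else 0 := by
    rw [← Finset.sum_add_distrib]
    apply Finset.sum_congr rfl
    intro j _
    have := j.2
    split_ifs <;> first | (exfalso; omega) | ring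
  rw [h1, block_sum M 0 c (by omega) (fun j => g (j:ℕ)),
      block_sum M c (M - c) (by omega) (fun j => g (j:ℕ))]
  simp

lemma quad_sum1 (l p n : ℕ) (hlp : l ≤ p) (hpn : p ≤ n) (u : EuclideanSpace ℝ (Fin n)) :
    (∑ j : Fin n, if (j : ℕ) < l ∨ p ≤ (j : ℕ) then u j ^ 2 else 0)
      = blk n 0 l u + blk n p (n - p) u := by
  unfold blk
  rw [← Finset.sum_add_distrib]
  apply Finset.sum_congr rfl
  intro j _
  have := j.2
  split_ifs <;> first | (exfalso; omega) | ring

lemma quad_sum2 (q l k n : ℕ) (hql : q ≤ l) (hlk : l ≤ k) (u : EuclideanSpace ℝ (Fin n)) :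
    (∑ j : Fin n, if (j : ℕ) < q then -(u j ^ 2)
        else if l ≤ (j : ℕ) ∧ (j : ℕ) < k then u j ^ 2 else 0)
      = blk n l (k - l) u - blk n 0 q u := by
  unfold blk
  rw [← Finset.sum_sub_distrib]
  apply Finset.sum_congr rfl
  intro j _
  split_ifs <;> first | (exfalso; omega) | ring

lemma quad_sum3 (q k p n : ℕ) (hqk : q ≤ k) (hkp : k ≤ p) (u : EuclideanSpace ℝ (Fin n)) :
    (∑ j : Fin n, if (j : ℕ) < q ∨ (k ≤ (j : ℕ) ∧ (j : ℕ) < p) then u j ^ 2 else 0)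
      = blk n 0 q u + blk n k (p - k) u := by
  unfold blk
  rw [← Finset.sum_add_distrib]
  apply Finset.sum_congr rfl
  intro j _
  split_ifs <;> first | (exfalso; omega) | ring

def fwd (q k p n : ℕ) (u : EuclideanSpace ℝ (Fin n)) :
    EuclideanSpace ℝ (Fin (n - p + k - q)) × EuclideanSpace ℝ (Fin (p - k)) ×
      EuclideanSpace ℝ (Fin q) :=
  ((WithLp.equiv 2 _).symm (fun i : Fin (n - p + k - q) =>
      (if (i:ℕ) < k - q then xt u (q + (i:ℕ)) else xt u (p + ((i:ℕ) - (k - q))))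
        / Real.sqrt ((n:ℝ) - p + k - q)),
   (WithLp.equiv 2 _).symm (fun i : Fin (p - k) =>
      xt u (k + (i:ℕ)) / Real.sqrt ((p:ℝ) - k + q - blk n 0 q u)),
   (WithLp.equiv 2 _).symm (fun i : Fin q =>
      xt u (i:ℕ) / Real.sqrt (blk n 0 q u)))

def Az (q l k p n : ℕ) (a : EuclideanSpace ℝ (Fin (n - p + k - q))) : ℝ :=
  ((n:ℝ) - p + k - q) *
    (∑ i : Fin (n - p + k - q),
      if l - q ≤ (i:ℕ) ∧ (i:ℕ) < (l - q) + (k - l) then (a i)^2 else 0)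
    + ((l:ℝ) + q - k)

def bwd (q l k p n : ℕ)
    (a : EuclideanSpace ℝ (Fin (n - p + k - q))) (b : EuclideanSpace ℝ (Fin (p - k)))
    (c : EuclideanSpace ℝ (Fin q)) : EuclideanSpace ℝ (Fin n) :=
  (WithLp.equiv 2 _).symm (fun j : Fin n =>
    if (j:ℕ) < q then Real.sqrt (Az q l k p n a) * xt c (j:ℕ)
    else if (j:ℕ) < k then Real.sqrt ((n:ℝ) - p + k - q) * xt a ((j:ℕ) - q)
    else if (j:ℕ) < p then
      Real.sqrt ((p:ℝ) - k + q - Az q l k p n a) * xt b ((j:ℕ) - k)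
    else Real.sqrt ((n:ℝ) - p + k - q) * xt a ((j:ℕ) - p + (k - q)))

lemma sphere_sum_sq {d : ℕ} {a : EuclideanSpace ℝ (Fin d)}
    (ha : a ∈ sphere (0 : EuclideanSpace ℝ (Fin d)) 1) : (∑ i, (a i)^2) = 1 := by
  rw [mem_sphere_zero_iff_norm, EuclideanSpace.norm_eq] at ha
  have h0 : (0:ℝ) ≤ 1 := zero_le_one
  have := Real.sqrt_eq_one.mp (by simpa [sq_abs] using ha)
  simpa using this

lemma sum_sq_sphere {d : ℕ} {a : EuclideanSpace ℝ (Fin d)}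
    (ha : (∑ i, (a i)^2) = 1) : a ∈ sphere (0 : EuclideanSpace ℝ (Fin d)) 1 := by
  rw [mem_sphere_zero_iff_norm, EuclideanSpace.norm_eq]
  simp only [Real.norm_eq_abs, sq_abs]
  rw [ha]; exact Real.sqrt_one

section main
variable {q l k p n : ℕ}

lemma quad_facts (hq : 0 < q) (hql : q < l) (hlk : l < k) (hkp : k < p)
    (hpn : p < n) (hklq : k < l + q) (hineq : n + k + l < 2 * p + q)
    {u : EuclideanSpace ℝ (Fin n)} (hu : u ∈ quadR3 q l k p n) :
    blk n 0 q u = blk n l (k - l) u + ((l:ℝ) + q - k) ∧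
    blk n q (k - q) u + blk n p (n - p) u = ((n:ℝ) - p + k - q) ∧
    blk n k (p - k) u = ((p:ℝ) - k + q) - blk n 0 q u ∧
    ((l:ℝ) + q - k) ≤ blk n 0 q u ∧ blk n 0 q u ≤ (n:ℝ) - p + l := by
  obtain ⟨h1, h2, h3⟩ := hu
  rw [quad_sum1 l p n (by omega) (by omega)] at h1
  rw [quad_sum2 q l k n (by omega) (by omega)] at h2
  rw [quad_sum3 q k p n (by omega) (by omega)] at h3
  have e0l : blk n 0 l u = blk n 0 q u + blk n q (l - q) u := by
    have h := blk_add n 0 q (l - q) u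
    rw [show q + (l - q) = l from by omega] at h
    simpa using h
  have eqk : blk n q (k - q) u = blk n q (l - q) u + blk n l (k - l) u := by
    have h := blk_add n q (l - q) (k - l) u
    rw [show (l - q) + (k - l) = k - q from by omega,
        show q + (l - q) = l from by omega] at h
    exact h
  have n1 := blk_nonneg n q (l - q) u
  have n2 := blk_nonneg n l (k - l) u
  have n3 := blk_nonneg n p (n - p) u
  refine ⟨by linarith, by linarith, by linarith, by linarith, by linarith⟩

lemma casts_facts (hq : 0 < q) (hql : q < l) (hlk : l < k) (hkp : k < p)
    (hpn : p < n) (hklq : k < l + q) (hineq : n + k + l < 2 * p + q) :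
    (0:ℝ) < (n:ℝ) - p + k - q ∧ (1:ℝ) ≤ (l:ℝ) + q - k ∧
      (n:ℝ) - p + l < (p:ℝ) - k + q := by
  have c1 : ((p:ℝ)) + q < (n:ℝ) + k := by exact_mod_cast (show p + q < n + k by omega)
  have c2 : ((k:ℝ)) + 1 ≤ (l:ℝ) + q := by exact_mod_cast (show k + 1 ≤ l + q by omega)
  have c3 : ((n:ℝ)) + k + l < 2 * p + q := by exact_mod_cast hineq
  refine ⟨by linarith, by linarith, by linarith⟩

lemma fwd_mem (hq : 0 < q) (hql : q < l) (hlk : l < k) (hkp : k < p)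
    (hpn : p < n) (hklq : k < l + q) (hineq : n + k + l < 2 * p + q)
    {u : EuclideanSpace ℝ (Fin n)} (hu : u ∈ quadR3 q l k p n) :
    (fwd q k p n u).1 ∈ sphere (0 : EuclideanSpace ℝ (Fin (n - p + k - q))) 1 ∧
    (fwd q k p n u).2.1 ∈ sphere (0 : EuclideanSpace ℝ (Fin (p - k))) 1 ∧
    (fwd q k p n u).2.2 ∈ sphere (0 : EuclideanSpace ℝ (Fin q)) 1 := by
  obtain ⟨hmR, hl1, hnl⟩ := casts_facts hq hql hlk hkp hpn hklq hineq
  obtain ⟨f1, f2, f3, f4, f5⟩ := quad_facts hq hql hlk hkp hpn hklq hineq hu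
  have hA : (0:ℝ) < blk n 0 q u := lt_of_lt_of_le (by linarith) f4
  have hB : (0:ℝ) < (p:ℝ) - k + q - blk n 0 q u := by linarith
  refine ⟨sum_sq_sphere ?_, sum_sq_sphere ?_, sum_sq_sphere ?_⟩
  · simp only [fwd, WithLp.equiv_symm_apply, PiLp.toLp_apply]
    set g : ℕ → ℝ := fun x =>
      (if x < k - q then xt u (q + x) else xt u (p + (x - (k - q))))^2 with hg
    have e1 : ∀ i : Fin (n - p + k - q),
        ((if (i:ℕ) < k - q then xt u (q + (i:ℕ)) else xt u (p + ((i:ℕ) - (k - q))))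
          / Real.sqrt ((n:ℝ) - p + k - q))^2 = g (i:ℕ) / ((n:ℝ) - p + k - q) := by
      intro i; rw [div_pow, Real.sq_sqrt hmR.le]
    rw [Finset.sum_congr rfl (fun i _ => e1 i), ← Finset.sum_div]
    have p1 : (∑ i : Fin (k - q), g (i:ℕ)) = blk n q (k - q) u := by
      rw [blk_eval n q (k - q) (by omega)]
      apply Finset.sum_congr rfl
      intro i _
      simp only [hg]
      rw [if_pos i.2]
    have p2 : (∑ i : Fin ((n - p + k - q) - (k - q)), g ((k - q) + (i:ℕ)))
        = blk n p (n - p) u := by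
      have ht : (n - p + k - q) - (k - q) = n - p := by omega
      rw [ht, blk_eval n p (n - p) (by omega)]
      apply Finset.sum_congr rfl
      intro i _
      simp only [hg]
      rw [if_neg (by omega)]
      simp [Nat.add_sub_cancel_left]
    rw [fin_split (n - p + k - q) (k - q) (by omega) g, p1, p2, f2]
    exact div_self hmR.ne'
  · simp only [fwd, WithLp.equiv_symm_apply, PiLp.toLp_apply]
    have e1 : ∀ i : Fin (p - k),
        (xt u (k + (i:ℕ)) / Real.sqrt ((p:ℝ) - k + q - blk n 0 q u))^2
          = (xt u (k + (i:ℕ)))^2 / ((p:ℝ) - k + q - blk n 0 q u) := by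
      intro i; rw [div_pow, Real.sq_sqrt hB.le]
    rw [Finset.sum_congr rfl (fun i _ => e1 i), ← Finset.sum_div,
        ← blk_eval n k (p - k) (by omega), f3]
    exact div_self hB.ne'
  · simp only [fwd, WithLp.equiv_symm_apply, PiLp.toLp_apply]
    have e1 : ∀ i : Fin q,
        (xt u (i:ℕ) / Real.sqrt (blk n 0 q u))^2
          = (xt u (0 + (i:ℕ)))^2 / blk n 0 q u := by
      intro i; rw [div_pow, Real.sq_sqrt hA.le, Nat.zero_add]
    rw [Finset.sum_congr rfl (fun i _ => e1 i), ← Finset.sum_div,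
        ← blk_eval n 0 q (by omega)]
    exact div_self hA.ne'

lemma Az_eq (hq : 0 < q) (hql : q < l) (hlk : l < k) (hkp : k < p)
    (hpn : p < n) (hklq : k < l + q)
    (a : EuclideanSpace ℝ (Fin (n - p + k - q))) :
    Az q l k p n a = ((n:ℝ) - p + k - q) *
      (∑ i : Fin (k - l), (xt a ((l - q) + (i:ℕ)))^2) + ((l:ℝ) + q - k) := by
  unfold Az
  congr 2
  rw [block_sum (n - p + k - q) (l - q) (k - l) (by omega)]
  apply Finset.sum_congr rfl
  intro i _
  rw [xt_lt a (by omega : (l - q) + (i:ℕ) < n - p + k - q)]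

lemma Az_lower (hq : 0 < q) (hql : q < l) (hlk : l < k) (hkp : k < p)
    (hpn : p < n) (hklq : k < l + q) (hineq : n + k + l < 2 * p + q)
    (a : EuclideanSpace ℝ (Fin (n - p + k - q))) :
    ((l:ℝ) + q - k) ≤ Az q l k p n a := by
  obtain ⟨hmR, hl1, hnl⟩ := casts_facts hq hql hlk hkp hpn hklq hineq
  unfold Az
  have hS : (0:ℝ) ≤ ∑ i : Fin (n - p + k - q),
      (if l - q ≤ (i:ℕ) ∧ (i:ℕ) < (l - q) + (k - l) then (a i)^2 else 0) := by
    apply Finset.sum_nonneg; intro i _; split_ifs <;> positivity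
  nlinarith

lemma Az_upper (hq : 0 < q) (hql : q < l) (hlk : l < k) (hkp : k < p)
    (hpn : p < n) (hklq : k < l + q) (hineq : n + k + l < 2 * p + q)
    (a : EuclideanSpace ℝ (Fin (n - p + k - q))) (ha : (∑ i, (a i)^2) = 1) :
    Az q l k p n a ≤ (n:ℝ) - p + l := by
  obtain ⟨hmR, hl1, hnl⟩ := casts_facts hq hql hlk hkp hpn hklq hineq
  unfold Az
  have hS : (∑ i : Fin (n - p + k - q),
      (if l - q ≤ (i:ℕ) ∧ (i:ℕ) < (l - q) + (k - l) then (a i)^2 else 0)) ≤ 1 := by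
    rw [← ha]
    apply Finset.sum_le_sum
    intro i _
    split_ifs
    · exact le_refl _
    · positivity
  nlinarith

lemma bwd_apply (a : EuclideanSpace ℝ (Fin (n - p + k - q)))
    (b : EuclideanSpace ℝ (Fin (p - k))) (c : EuclideanSpace ℝ (Fin q))
    {x : ℕ} (hx : x < n) :
    xt (bwd q l k p n a b c) x
      = (if x < q then Real.sqrt (Az q l k p n a) * xt c x
         else if x < k then Real.sqrt ((n:ℝ) - p + k - q) * xt a (x - q)
         else if x < p then Real.sqrt ((p:ℝ) - k + q - Az q l k p n a) * xt b (x - k)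
         else Real.sqrt ((n:ℝ) - p + k - q) * xt a (x - p + (k - q))) := by
  rw [xt_lt _ hx]
  simp [bwd, WithLp.equiv_symm_apply, PiLp.toLp_apply]

lemma bwd_blocks (hq : 0 < q) (hql : q < l) (hlk : l < k) (hkp : k < p)
    (hpn : p < n) (hklq : k < l + q) (hineq : n + k + l < 2 * p + q)
    (a : EuclideanSpace ℝ (Fin (n - p + k - q))) (b : EuclideanSpace ℝ (Fin (p - k)))
    (c : EuclideanSpace ℝ (Fin q)) (ha : (∑ i, (a i)^2) = 1)
    (hb : (∑ i, (b i)^2) = 1) (hc : (∑ i, (c i)^2) = 1) :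
    blk n 0 q (bwd q l k p n a b c) = Az q l k p n a ∧
    blk n q (l - q) (bwd q l k p n a b c)
      = ((n:ℝ) - p + k - q) * ∑ i : Fin (l - q), (xt a (i:ℕ))^2 ∧
    blk n l (k - l) (bwd q l k p n a b c)
      = ((n:ℝ) - p + k - q) * ∑ i : Fin (k - l), (xt a ((l - q) + (i:ℕ)))^2 ∧
    blk n k (p - k) (bwd q l k p n a b c)
      = ((p:ℝ) - k + q) - Az q l k p n a ∧
    blk n p (n - p) (bwd q l k p n a b c)
      = ((n:ℝ) - p + k - q) * ∑ i : Fin (n - p), (xt a ((k - q) + (i:ℕ)))^2 := by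
  obtain ⟨hmR, hl1, hnl⟩ := casts_facts hq hql hlk hkp hpn hklq hineq
  have hAz0 : (0:ℝ) ≤ Az q l k p n a := by
    have := Az_lower hq hql hlk hkp hpn hklq hineq a; linarith
  have hAzlt : Az q l k p n a ≤ (n:ℝ) - p + l :=
    Az_upper hq hql hlk hkp hpn hklq hineq a ha
  have hB0 : (0:ℝ) ≤ (p:ℝ) - k + q - Az q l k p n a := by linarith
  refine ⟨?_, ?_, ?_, ?_, ?_⟩
  · have e : blk n 0 q (bwd q l k p n a b c) = Az q l k p n a * ∑ i : Fin q, (c i)^2 := by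
      rw [blk_eval n 0 q (by omega), Finset.mul_sum]
      apply Finset.sum_congr rfl
      intro i _
      rw [bwd_apply a b c (by omega : 0 + (i:ℕ) < n), if_pos (by omega : 0 + (i:ℕ) < q),
          mul_pow, Real.sq_sqrt hAz0]
      congr 2
      rw [Nat.zero_add, xt_fin]
    rw [e, hc, mul_one]
  · rw [blk_eval n q (l - q) (by omega), Finset.mul_sum]
    apply Finset.sum_congr rfl
    intro i _
    rw [bwd_apply a b c (by omega : q + (i:ℕ) < n), if_neg (by omega),
        if_pos (by omega : q + (i:ℕ) < k), mul_pow, Real.sq_sqrt hmR.le]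
    congr 3
    omega
  · rw [blk_eval n l (k - l) (by omega), Finset.mul_sum]
    apply Finset.sum_congr rfl
    intro i _
    rw [bwd_apply a b c (by omega : l + (i:ℕ) < n), if_neg (by omega),
        if_pos (by omega : l + (i:ℕ) < k), mul_pow, Real.sq_sqrt hmR.le]
    congr 3
    omega
  · have e : blk n k (p - k) (bwd q l k p n a b c)
        = ((p:ℝ) - k + q - Az q l k p n a) * ∑ i : Fin (p - k), (b i)^2 := by
      rw [blk_eval n k (p - k) (by omega), Finset.mul_sum]
      apply Finset.sum_congr rfl
      intro i _
      rw [bwd_apply a b c (by omega : k + (i:ℕ) < n), if_neg (by omega),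
          if_neg (by omega), if_pos (by omega : k + (i:ℕ) < p), mul_pow,
          Real.sq_sqrt hB0]
      congr 2
      rw [show k + (i:ℕ) - k = (i:ℕ) by omega, xt_fin]
    rw [e, hb, mul_one]
  · rw [blk_eval n p (n - p) (by omega), Finset.mul_sum]
    apply Finset.sum_congr rfl
    intro i _
    rw [bwd_apply a b c (by omega : p + (i:ℕ) < n), if_neg (by omega),
        if_neg (by omega), if_neg (by omega), mul_pow, Real.sq_sqrt hmR.le]
    congr 3
    omega

lemma a_split (hq : 0 < q) (hql : q < l) (hlk : l < k) (hkp : k < p)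
    (hpn : p < n) (hklq : k < l + q)
    (a : EuclideanSpace ℝ (Fin (n - p + k - q))) (ha : (∑ i, (a i)^2) = 1) :
    (∑ i : Fin (l - q), (xt a (i:ℕ))^2) + (∑ i : Fin (k - l), (xt a ((l - q) + (i:ℕ)))^2)
      + (∑ i : Fin (n - p), (xt a ((k - q) + (i:ℕ)))^2) = 1 := by
  have h0 : (∑ i : Fin (n - p + k - q), (xt a (i:ℕ))^2) = 1 := by
    rw [← ha]; apply Finset.sum_congr rfl; intro i _; rw [xt_fin]
  rw [fin_split (n - p + k - q) (k - q) (by omega) (fun x => (xt a x)^2)] at h0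
  rw [fin_split (k - q) (l - q) (by omega) (fun x => (xt a x)^2)] at h0
  rw [show (k - q) - (l - q) = k - l by omega,
      show (n - p + k - q) - (k - q) = n - p by omega] at h0
  linarith [h0]

lemma bwd_mem (hq : 0 < q) (hql : q < l) (hlk : l < k) (hkp : k < p)
    (hpn : p < n) (hklq : k < l + q) (hineq : n + k + l < 2 * p + q)
    (a : EuclideanSpace ℝ (Fin (n - p + k - q))) (b : EuclideanSpace ℝ (Fin (p - k)))
    (c : EuclideanSpace ℝ (Fin q)) (ha : (∑ i, (a i)^2) = 1)
    (hb : (∑ i, (b i)^2) = 1) (hc : (∑ i, (c i)^2) = 1) :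
    bwd q l k p n a b c ∈ quadR3 q l k p n := by
  obtain ⟨b1, b2, b3, b4, b5⟩ := bwd_blocks hq hql hlk hkp hpn hklq hineq a b c ha hb hc
  have hsum := a_split hq hql hlk hkp hpn hklq a ha
  have hAze := Az_eq hq hql hlk hkp hpn hklq a
  set u' := bwd q l k p n a b c
  have e0l : blk n 0 l u' = blk n 0 q u' + blk n q (l - q) u' := by
    have h := blk_add n 0 q (l - q) u'
    rw [show q + (l - q) = l from by omega] at h
    simpa using h
  refine ⟨?_, ?_, ?_⟩
  · rw [quad_sum1 l p n (by omega) (by omega), e0l, b1, b2, b5, hAze]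
    linear_combination ((n:ℝ) - p + k - q) * hsum
  · rw [quad_sum2 q l k n (by omega) (by omega), b3, b1, hAze]
    ring
  · rw [quad_sum3 q k p n (by omega) (by omega), b1, b4]
    ring

lemma Az_fwd (hq : 0 < q) (hql : q < l) (hlk : l < k) (hkp : k < p)
    (hpn : p < n) (hklq : k < l + q) (hineq : n + k + l < 2 * p + q)
    {u : EuclideanSpace ℝ (Fin n)} (hu : u ∈ quadR3 q l k p n) :
    Az q l k p n (fwd q k p n u).1 = blk n 0 q u := by
  obtain ⟨hmR, hl1, hnl⟩ := casts_facts hq hql hlk hkp hpn hklq hineq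
  obtain ⟨f1, f2, f3, f4, f5⟩ := quad_facts hq hql hlk hkp hpn hklq hineq hu
  rw [Az_eq hq hql hlk hkp hpn hklq]
  have e : (∑ i : Fin (k - l), (xt (fwd q k p n u).1 ((l - q) + (i:ℕ)))^2)
      = blk n l (k - l) u / ((n:ℝ) - p + k - q) := by
    rw [blk_eval n l (k - l) (by omega), Finset.sum_div]
    apply Finset.sum_congr rfl
    intro i _
    rw [xt_lt _ (by omega : (l - q) + (i:ℕ) < n - p + k - q)]
    simp only [fwd, WithLp.equiv_symm_apply, PiLp.toLp_apply]
    rw [if_pos (by omega : (l - q) + (i:ℕ) < k - q), div_pow, Real.sq_sqrt hmR.le,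
        show q + ((l - q) + (i:ℕ)) = l + (i:ℕ) from by omega]
  rw [e, mul_div_cancel₀ _ hmR.ne']
  linarith

lemma bwd_fwd (hq : 0 < q) (hql : q < l) (hlk : l < k) (hkp : k < p)
    (hpn : p < n) (hklq : k < l + q) (hineq : n + k + l < 2 * p + q)
    {u : EuclideanSpace ℝ (Fin n)} (hu : u ∈ quadR3 q l k p n) :
    bwd q l k p n (fwd q k p n u).1 (fwd q k p n u).2.1 (fwd q k p n u).2.2 = u := by
  obtain ⟨hmR, hl1, hnl⟩ := casts_facts hq hql hlk hkp hpn hklq hineq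
  obtain ⟨f1, f2, f3, f4, f5⟩ := quad_facts hq hql hlk hkp hpn hklq hineq hu
  have hA : (0:ℝ) < blk n 0 q u := lt_of_lt_of_le (by linarith) f4
  have hB : (0:ℝ) < (p:ℝ) - k + q - blk n 0 q u := by linarith
  have hAzf := Az_fwd hq hql hlk hkp hpn hklq hineq hu
  ext j
  have hval : (bwd q l k p n (fwd q k p n u).1 (fwd q k p n u).2.1 (fwd q k p n u).2.2) j
      = xt (bwd q l k p n (fwd q k p n u).1 (fwd q k p n u).2.1 (fwd q k p n u).2.2) (j:ℕ) :=
    (xt_fin _ j).symm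
  rw [hval, bwd_apply _ _ _ j.2, hAzf]
  by_cases h1 : (j:ℕ) < q
  · rw [if_pos h1, xt_lt _ h1]
    simp only [fwd, WithLp.equiv_symm_apply, PiLp.toLp_apply]
    rw [← mul_div_assoc, mul_div_cancel_left₀ _ (Real.sqrt_ne_zero'.mpr hA)]
    exact xt_fin u j
  · rw [if_neg h1]
    by_cases h2 : (j:ℕ) < k
    · rw [if_pos h2, xt_lt _ (by omega : (j:ℕ) - q < n - p + k - q)]
      simp only [fwd, WithLp.equiv_symm_apply, PiLp.toLp_apply]
      rw [if_pos (by omega : (j:ℕ) - q < k - q),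
          show q + ((j:ℕ) - q) = (j:ℕ) from by omega,
          ← mul_div_assoc, mul_div_cancel_left₀ _ (Real.sqrt_ne_zero'.mpr hmR)]
      exact xt_fin u j
    · rw [if_neg h2]
      by_cases h3 : (j:ℕ) < p
      · rw [if_pos h3, xt_lt _ (by omega : (j:ℕ) - k < p - k)]
        simp only [fwd, WithLp.equiv_symm_apply, PiLp.toLp_apply]
        rw [show k + ((j:ℕ) - k) = (j:ℕ) from by omega,
            ← mul_div_assoc, mul_div_cancel_left₀ _ (Real.sqrt_ne_zero'.mpr hB)]
        exact xt_fin u j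
      · rw [if_neg h3, xt_lt _ (by omega : (j:ℕ) - p + (k - q) < n - p + k - q)]
        simp only [fwd, WithLp.equiv_symm_apply, PiLp.toLp_apply]
        rw [if_neg (by omega : ¬ ((j:ℕ) - p + (k - q) < k - q)),
            show p + ((j:ℕ) - p + (k - q) - (k - q)) = (j:ℕ) from by omega,
            ← mul_div_assoc, mul_div_cancel_left₀ _ (Real.sqrt_ne_zero'.mpr hmR)]
        exact xt_fin u j

lemma fwd_bwd (hq : 0 < q) (hql : q < l) (hlk : l < k) (hkp : k < p)
    (hpn : p < n) (hklq : k < l + q) (hineq : n + k + l < 2 * p + q)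
    (a : EuclideanSpace ℝ (Fin (n - p + k - q))) (b : EuclideanSpace ℝ (Fin (p - k)))
    (c : EuclideanSpace ℝ (Fin q)) (ha : (∑ i, (a i)^2) = 1)
    (hb : (∑ i, (b i)^2) = 1) (hc : (∑ i, (c i)^2) = 1) :
    fwd q k p n (bwd q l k p n a b c) = (a, b, c) := by
  obtain ⟨hmR, hl1, hnl⟩ := casts_facts hq hql hlk hkp hpn hklq hineq
  have hAz0 : (0:ℝ) < Az q l k p n a := by
    have := Az_lower hq hql hlk hkp hpn hklq hineq a; linarith
  have hAzlt : Az q l k p n a ≤ (n:ℝ) - p + l :=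
    Az_upper hq hql hlk hkp hpn hklq hineq a ha
  have hB : (0:ℝ) < (p:ℝ) - k + q - Az q l k p n a := by linarith
  have b1 := (bwd_blocks hq hql hlk hkp hpn hklq hineq a b c ha hb hc).1
  refine Prod.ext ?_ (Prod.ext ?_ ?_)
  · ext i
    simp only [fwd, WithLp.equiv_symm_apply, PiLp.toLp_apply]
    by_cases h1 : (i:ℕ) < k - q
    · rw [if_pos h1, bwd_apply a b c (by omega : q + (i:ℕ) < n),
          if_neg (by omega), if_pos (by omega : q + (i:ℕ) < k),
          show q + (i:ℕ) - q = (i:ℕ) from by omega,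
          mul_comm, mul_div_assoc, div_self (Real.sqrt_ne_zero'.mpr hmR), mul_one]
      exact xt_fin a i
    · rw [if_neg h1, bwd_apply a b c (by omega : p + ((i:ℕ) - (k - q)) < n),
          if_neg (by omega), if_neg (by omega), if_neg (by omega),
          show p + ((i:ℕ) - (k - q)) - p + (k - q) = (i:ℕ) from by omega,
          mul_comm, mul_div_assoc, div_self (Real.sqrt_ne_zero'.mpr hmR), mul_one]
      exact xt_fin a i
  · ext i
    simp only [fwd, WithLp.equiv_symm_apply, PiLp.toLp_apply]
    rw [b1, bwd_apply a b c (by omega : k + (i:ℕ) < n), if_neg (by omega),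
        if_neg (by omega), if_pos (by omega : k + (i:ℕ) < p),
        show k + (i:ℕ) - k = (i:ℕ) from by omega,
        mul_comm, mul_div_assoc, div_self (Real.sqrt_ne_zero'.mpr hB), mul_one]
    exact xt_fin b i
  · ext i
    simp only [fwd, WithLp.equiv_symm_apply, PiLp.toLp_apply]
    rw [b1, bwd_apply a b c (by omega : (i:ℕ) < n), if_pos (by omega : (i:ℕ) < q),
        mul_comm, mul_div_assoc, div_self (Real.sqrt_ne_zero'.mpr hAz0), mul_one]
    exact xt_fin c i

lemma xt_cont {d : ℕ} (x : ℕ) : Continuous (fun v : EuclideanSpace ℝ (Fin d) => xt v x) := by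
  unfold xt
  split_ifs with h
  · exact PiLp.continuous_apply 2 _ _
  · exact continuous_const

lemma blk_cont (n off M : ℕ) : Continuous (blk n off M) := by
  unfold blk
  apply continuous_finset_sum
  intro j _
  split_ifs
  · exact (PiLp.continuous_apply 2 _ j).pow 2
  · exact continuous_const

lemma Az_cont : Continuous (Az q l k p n) := by
  unfold Az
  refine Continuous.add (Continuous.mul continuous_const ?_) continuous_const
  apply continuous_finset_sum
  intro i _
  split_ifs
  · exact (PiLp.continuous_apply 2 _ i).pow 2
  · exact continuous_const

theorem stmt1_aux (hq : 0 < q) (hql : q < l) (hlk : l < k) (hkp : k < p)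
    (hpn : p < n) (hklq : k < l + q) (hineq : n + k + l < 2 * p + q) :
    Nonempty (quadR3 q l k p n ≃ₜ
      sphere (0 : EuclideanSpace ℝ (Fin (n - p + k - q))) 1 ×
      sphere (0 : EuclideanSpace ℝ (Fin (p - k))) 1 ×
      sphere (0 : EuclideanSpace ℝ (Fin q)) 1) := by
  obtain ⟨hmR, hl1, hnl⟩ := casts_facts hq hql hlk hkp hpn hklq hineq
  refine ⟨{
    toFun := fun x => (⟨(fwd q k p n x.1).1,
        (fwd_mem hq hql hlk hkp hpn hklq hineq x.2).1⟩,
      ⟨(fwd q k p n x.1).2.1, (fwd_mem hq hql hlk hkp hpn hklq hineq x.2).2.1⟩,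
      ⟨(fwd q k p n x.1).2.2, (fwd_mem hq hql hlk hkp hpn hklq hineq x.2).2.2⟩)
    invFun := fun w => ⟨bwd q l k p n w.1.1 w.2.1.1 w.2.2.1,
      bwd_mem hq hql hlk hkp hpn hklq hineq _ _ _
        (sphere_sum_sq w.1.2) (sphere_sum_sq w.2.1.2) (sphere_sum_sq w.2.2.2)⟩
    left_inv := ?_
    right_inv := ?_
    continuous_toFun := ?_
    continuous_invFun := ?_ }⟩
  · intro x
    exact Subtype.ext (bwd_fwd hq hql hlk hkp hpn hklq hineq x.2)
  · intro w
    have h := fwd_bwd hq hql hlk hkp hpn hklq hineq w.1.1 w.2.1.1 w.2.2.1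
      (sphere_sum_sq w.1.2) (sphere_sum_sq w.2.1.2) (sphere_sum_sq w.2.2.2)
    refine Prod.ext (Subtype.ext ?_) (Prod.ext (Subtype.ext ?_) (Subtype.ext ?_))
    · exact congrArg Prod.fst h
    · exact congrArg (fun z => z.2.1) h
    · exact congrArg (fun z => z.2.2) h
  · have hxt : ∀ x : ℕ, Continuous
        (fun y : ↥(quadR3 q l k p n) => xt (y : EuclideanSpace ℝ (Fin n)) x) :=
      fun x => (xt_cont x).comp continuous_subtype_val
    have hblkc : Continuous (fun y : ↥(quadR3 q l k p n) => blk n 0 q ↑y) :=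
      (blk_cont n 0 q).comp continuous_subtype_val
    refine Continuous.prodMk (Continuous.subtype_mk ?_ _)
      (Continuous.prodMk (Continuous.subtype_mk ?_ _) (Continuous.subtype_mk ?_ _))
    · simp only [fwd, WithLp.equiv_symm_apply]
      refine (PiLp.continuous_toLp 2 _).comp (continuous_pi fun i => ?_)
      apply Continuous.div_const
      split_ifs
      · exact hxt _
      · exact hxt _
    · simp only [fwd, WithLp.equiv_symm_apply]
      refine (PiLp.continuous_toLp 2 _).comp (continuous_pi fun i => ?_)
      refine Continuous.div (hxt _)
        (Real.continuous_sqrt.comp (continuous_const.sub hblkc)) ?_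
      intro y
      obtain ⟨f1, f2, f3, f4, f5⟩ := quad_facts hq hql hlk hkp hpn hklq hineq y.2
      exact Real.sqrt_ne_zero'.mpr (by linarith)
    · simp only [fwd, WithLp.equiv_symm_apply]
      refine (PiLp.continuous_toLp 2 _).comp (continuous_pi fun i => ?_)
      refine Continuous.div (hxt _) (Real.continuous_sqrt.comp hblkc) ?_
      intro y
      obtain ⟨f1, f2, f3, f4, f5⟩ := quad_facts hq hql hlk hkp hpn hklq hineq y.2
      exact Real.sqrt_ne_zero'.mpr (by linarith)
  · set D := (sphere (0 : EuclideanSpace ℝ (Fin (n - p + k - q))) 1 ×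
      sphere (0 : EuclideanSpace ℝ (Fin (p - k))) 1 ×
      sphere (0 : EuclideanSpace ℝ (Fin q)) 1)
    have ca : Continuous (fun w : D => (w.1 : EuclideanSpace ℝ (Fin (n - p + k - q)))) :=
      continuous_subtype_val.comp continuous_fst
    have cb : Continuous (fun w : D => (w.2.1 : EuclideanSpace ℝ (Fin (p - k)))) :=
      continuous_subtype_val.comp (continuous_fst.comp continuous_snd)
    have cc : Continuous (fun w : D => (w.2.2 : EuclideanSpace ℝ (Fin q))) :=
      continuous_subtype_val.comp (continuous_snd.comp continuous_snd)
    have hAzc : Continuous (fun w : D => Az q l k p n ↑w.1) := Az_cont.comp ca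
    apply Continuous.subtype_mk
    show Continuous fun w : D => bwd q l k p n ↑w.1 ↑w.2.1 ↑w.2.2
    simp only [bwd, WithLp.equiv_symm_apply]
    refine (PiLp.continuous_toLp 2 _).comp (continuous_pi fun j => ?_)
    split_ifs
    · exact ((Real.continuous_sqrt.comp hAzc).mul ((xt_cont _).comp cc))
    · exact (continuous_const.mul ((xt_cont _).comp ca))
    · exact ((Real.continuous_sqrt.comp (continuous_const.sub hAzc)).mul
        ((xt_cont _).comp cb))
    · exact (continuous_const.mul ((xt_cont _).comp ca))

end main
end QR3aux

/-- `R₃` is homeomorphic to `S^{n-p+k-q-1} × S^{p-k-1} × S^{q-1}`. -/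
theorem stmt1 (q l k p n : ℕ) (hq : 0 < q) (hql : q < l) (hlk : l < k) (hkp : k < p)
    (hpn : p < n) (hklq : k < l + q) (hineq : n + k + l < 2 * p + q) :
    Nonempty (quadR3 q l k p n ≃ₜ
      sphere (0 : EuclideanSpace ℝ (Fin (n - p + k - q))) 1 ×
      sphere (0 : EuclideanSpace ℝ (Fin (p - k))) 1 ×
      sphere (0 : EuclideanSpace ℝ (Fin q)) 1) := by
  exact stmt1_aux hq hql hlk hkp hpn hklq hineq
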